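/- arXiv:1907.12828 — 5 statements merged into one kernel-verified Lean document; each statement's English description precedes it below -/
import Mathlib

section
/- Let Y be an abelian group and ψ : Y → ℂ a function. If for some elements a₁,…,aₘ with each aⱼ(Y) dense (here take aⱼ to be surjective endomorphisms of Y) the equation ψ(a₁y₁+⋯+aₘyₘ) = Σⱼ rⱼ(y₁,…,y_{j-1},y_{j+1},…,yₘ) holds for all y₁,…,yₘ ∈ Y and some functions rⱼ : Y^{m-1} → ℂ, then the iterated finite difference Δ_{a₁h₁}⋯Δ_{aₘhₘ} applied to y ↦ ψ(a₁y₁+⋯+aₘyₘ) vanishes identically; in particular, when the aⱼ are surjective, Δ_h^m ψ(y) = 0 for all y, h ∈ Y, i.e. ψ is a polynomial of degree at most m−1. -/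
/-- Finite difference operator: `dOp h ψ y = ψ (y + h) - ψ y`. -/
def dOp {G : Type*} [AddCommGroup G] (h : G) (ψ : G → ℂ) : G → ℂ :=
  fun y => ψ (y + h) - ψ y

/-- Iterated finite differences along a list of increments. -/
def dIter {G : Type*} [AddCommGroup G] : List G → (G → ℂ) → (G → ℂ)
  | [], ψ => ψ
  | h :: t, ψ => dOp h (dIter t ψ)

lemma dIter_replicate {G : Type*} [AddCommGroup G] (h : G) (ψ : G → ℂ) :
    ∀ n, dIter (List.replicate n h) ψ = (dOp h)^[n] ψ
  | 0 => rfl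
  | n + 1 => by
      rw [List.replicate_succ]
      show dOp h (dIter (List.replicate n h) ψ) = _
      rw [dIter_replicate h ψ n, Function.iterate_succ_apply']

lemma dIter_map_eq {ι : Type*} [DecidableEq ι] {G : Type*} [AddCommGroup G] (ψ : G → ℂ)
    (g : ι → G) : ∀ (l : List ι), l.Nodup → ∀ (y : G),
    dIter (l.map g) ψ y =
      ∑ S ∈ l.toFinset.powerset, (-1 : ℂ) ^ (l.length - S.card) * ψ (y + ∑ j ∈ S, g j)
  | [], _, y => by simp [dIter]
  | i :: t, hnd, y => by
      rw [List.nodup_cons] at hnd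
      obtain ⟨hit, hnd⟩ := hnd
      have hit' : i ∉ t.toFinset := by simpa using hit
      have hLHS : dIter ((i :: t).map g) ψ y =
          dIter (t.map g) ψ (y + g i) - dIter (t.map g) ψ y := rfl
      rw [hLHS, dIter_map_eq ψ g t hnd (y + g i), dIter_map_eq ψ g t hnd y]
      have : (i :: t).toFinset = insert i t.toFinset := by simp
      rw [this, Finset.sum_powerset_insert hit']
      rw [← Finset.sum_sub_distrib, ← Finset.sum_add_distrib]
      apply Finset.sum_congr rfl
      intro S hS
      rw [Finset.mem_powerset] at hS
      have hiS : i ∉ S := fun h => hit' (hS h)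
      have hcard : S.card ≤ t.length :=
        le_trans (Finset.card_le_card hS) (List.toFinset_card_le t)
      have h1 : (i :: t).length - S.card = (t.length - S.card) + 1 := by
        simp only [List.length_cons]; omega
      have h2 : (i :: t).length - (insert i S).card = t.length - S.card := by
        rw [Finset.card_insert_of_notMem hiS]
        simp only [List.length_cons]; omega
      rw [h1, h2, Finset.sum_insert hiS]
      have : y + (g i + ∑ j ∈ S, g j) = y + g i + ∑ j ∈ S, g j := by abel
      rw [this, pow_succ]
      ring


/-- if `ψ (a₁ y₁ + ⋯ + aₘ yₘ)` splits as a sum of functions each of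
which does not depend on one of the variables, and each `aⱼ` is a surjective
endomorphism (so `aⱼ(Y)` is dense), then the iterated difference
`Δ_{a₁h₁} ⋯ Δ_{aₘhₘ} ψ` vanishes, and in particular `Δ_h^m ψ ≡ 0`, i.e. `ψ`
is a polynomial of degree at most `m - 1`. -/
theorem stmt0 {Y : Type*} [AddCommGroup Y] (m : ℕ) (hm : 1 ≤ m)
    (a : Fin m → Y →+ Y) (ha : ∀ j, Function.Surjective (a j))
    (ψ : Y → ℂ) (r : Fin m → (Fin m → Y) → ℂ)
    (hr : ∀ (j : Fin m) (y y' : Fin m → Y), (∀ k, k ≠ j → y k = y' k) → r j y = r j y')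
    (heq : ∀ y : Fin m → Y, ψ (∑ j, a j (y j)) = ∑ j, r j y) :
    (∀ (h : Fin m → Y) (y : Y), dIter (List.ofFn fun j => a j (h j)) ψ y = 0) ∧
    (∀ y h : Y, (dOp h)^[m] ψ y = 0) := by
  have main : ∀ (h : Fin m → Y) (y : Y), dIter (List.ofFn fun j => a j (h j)) ψ y = 0 := by
    intro h y
    rw [List.ofFn_eq_map,
      dIter_map_eq ψ (fun j => a j (h j)) (List.finRange m) (List.nodup_finRange m) y,
      List.toFinset_finRange, List.length_finRange]
    -- decompose y
    set j₀ : Fin m := ⟨0, hm⟩ with hj₀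
    obtain ⟨z₀, hz₀⟩ := ha j₀ y
    set z : Fin m → Y := fun j => if j = j₀ then z₀ else 0 with hzdef
    have hz : ∑ j, a j (z j) = y := by
      rw [hzdef]
      rw [Finset.sum_congr rfl (fun j _ => by
        show a j (if j = j₀ then z₀ else 0) = if j = j₀ then a j₀ z₀ else 0
        split <;> simp_all)]
      simp [hz₀]
    -- rewrite each ψ value using heq
    have hψ : ∀ S : Finset (Fin m),
        ψ (y + ∑ j ∈ S, a j (h j)) =
          ∑ j, r j (fun k => z k + (if k ∈ S then h k else 0)) := by
      intro S
      rw [← heq]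
      congr 1
      have : ∀ j : Fin m, a j (z j + (if j ∈ S then h j else 0))
          = a j (z j) + (if j ∈ S then a j (h j) else 0) := by
        intro j; rw [map_add]; congr 1; split <;> simp
      rw [Finset.sum_congr rfl (fun j _ => this j), Finset.sum_add_distrib, hz,
        Finset.sum_ite_mem, Finset.univ_inter]
    simp only [hψ, Finset.mul_sum]
    rw [Finset.sum_comm]
    apply Finset.sum_eq_zero
    intro j _
    have hju : (Finset.univ : Finset (Fin m)) = insert j (Finset.univ.erase j) := by
      simp
    have key := Finset.sum_powerset_insert (Finset.notMem_erase j Finset.univ)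
      (fun S => (-1 : ℂ) ^ (m - S.card) * r j fun k => z k + if k ∈ S then h k else 0)
    rw [Finset.insert_erase (Finset.mem_univ j)] at key
    rw [key]
    rw [← Finset.sum_add_distrib]
    apply Finset.sum_eq_zero
    intro S hS
    rw [Finset.mem_powerset] at hS
    have hjS : j ∉ S := fun hmem => (Finset.mem_erase.mp (hS hmem)).1 rfl
    have hrw : r j (fun k => z k + (if k ∈ insert j S then h k else 0))
        = r j (fun k => z k + (if k ∈ S then h k else 0)) := by
      apply hr
      intro k hk
      have : (if k ∈ insert j S then h k else 0) = (if k ∈ S then h k else 0) := by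
        simp [Finset.mem_insert, hk]
      rw [this]
    rw [hrw, Finset.card_insert_of_notMem hjS]
    have hcard : S.card < m := by
      have := Finset.card_le_card hS
      have h2 : (Finset.univ.erase j).card = m - 1 := by
        rw [Finset.card_erase_of_mem (Finset.mem_univ j), Finset.card_univ, Fintype.card_fin]
      omega
    have h3 : m - S.card = (m - (S.card + 1)) + 1 := by omega
    rw [h3, pow_succ]
    ring
  refine ⟨main, ?_⟩
  intro y h
  choose hj hhj using fun j => ha j h
  have := main hj y
  have hfun : (fun j => a j (hj j)) = fun _ : Fin m => h := by
    funext j; exact hhj j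
  rw [hfun, List.ofFn_const, dIter_replicate] at this
  exact this
end

section
/- On the real line, a function ψ : ℝ → ℂ is a polynomial in the finite-difference sense (i.e. Δ_h^{n+1} ψ ≡ 0 for all h ∈ ℝ) and continuous if and only if ψ is an ordinary polynomial function of degree at most n. -/
noncomputable def trOp (h : ℝ) : Module.End ℂ (ℝ → ℂ) where
  toFun f := fun y => f (y + h)
  map_add' f g := rfl
  map_smul' c f := rfl

lemma dOp_eq (h : ℝ) (f : ℝ → ℂ) : dOp h f = (trOp h - 1) f := rfl

lemma dOp_iter (h : ℝ) (j : ℕ) (f : ℝ → ℂ) : (dOp h)^[j] f = ((trOp h - 1)^j) f := by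
  induction j with
  | zero => rfl
  | succ j ih => rw [Function.iterate_succ_apply', ih, pow_succ', Module.End.mul_apply, dOp_eq]

lemma trOp_pow (h : ℝ) (m : ℕ) (f : ℝ → ℂ) (y : ℝ) : ((trOp h)^m) f y = f (y + m * h) := by
  induction m generalizing y with
  | zero => simp
  | succ m ih =>
      rw [pow_succ', Module.End.mul_apply]
      show ((trOp h)^m) f (y + h) = _
      rw [ih]; push_cast; ring_nf

lemma dOp_binom (h : ℝ) (ψ : ℝ → ℂ) (m : ℕ) (y : ℝ) :
    ψ (y + m * h) = ∑ j ∈ Finset.range (m + 1), (m.choose j : ℂ) * (dOp h)^[j] ψ y := by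
  have hc : Commute (trOp h - 1) 1 := Commute.one_right _
  have := hc.add_pow m
  rw [sub_add_cancel] at this
  have happ := congrFun (congrArg (fun A : Module.End ℂ (ℝ → ℂ) => A ψ) this) y
  simp only [LinearMap.sum_apply, Finset.sum_apply, one_pow, mul_one,
    Module.End.mul_apply, Module.End.natCast_apply, trOp_pow] at happ
  rw [happ]
  refine Finset.sum_congr rfl fun j hj => ?_
  rw [dOp_iter, map_nsmul]
  simp [mul_comm]

lemma dOp_iter_zero (h : ℝ) (r : ℕ) : (dOp h)^[r] (fun _ => (0:ℂ)) = fun _ => 0 := by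
  induction r with
  | zero => rfl
  | succ r ih => rw [Function.iterate_succ_apply, show dOp h (fun _ => (0:ℂ)) = fun _ => 0 from funext fun y => by simp [dOp], ih]

lemma dOp_vanish {n : ℕ} {ψ : ℝ → ℂ} (hd : ∀ (y h : ℝ), (dOp h)^[n + 1] ψ y = 0)
    (h : ℝ) {j : ℕ} (hj : n + 1 ≤ j) : (dOp h)^[j] ψ = fun _ => 0 := by
  obtain ⟨r, rfl⟩ := Nat.exists_eq_add_of_le hj
  rw [Nat.add_comm, Function.iterate_add_apply,
    show (dOp h)^[n+1] ψ = fun _ => 0 from funext fun y => hd y h, dOp_iter_zero]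

lemma dOp_grid {n : ℕ} {ψ : ℝ → ℂ} (hd : ∀ (y h : ℝ), (dOp h)^[n + 1] ψ y = 0)
    (h : ℝ) (m : ℕ) (y : ℝ) :
    ψ (y + m * h) = ∑ j ∈ Finset.range (n + 1), (m.choose j : ℂ) * (dOp h)^[j] ψ y := by
  rw [dOp_binom h ψ m y]
  rcases le_total (m+1) (n+1) with hle | hle
  · refine Finset.sum_subset (Finset.range_subset_range.2 hle) fun j _ hj => ?_
    rw [Nat.choose_eq_zero_of_lt (by simpa using Finset.mem_range.not.1 hj)]
    simp
  · refine (Finset.sum_subset (Finset.range_subset_range.2 hle) (fun j _ hj => ?_)).symm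
    rw [dOp_vanish hd h (by simpa using Finset.mem_range.not.1 hj)]
    simp

open Polynomial in
lemma dOp_polyeval (h : ℝ) (P : Polynomial ℂ) :
    dOp h (fun y : ℝ => P.eval (y:ℂ)) =
      fun y : ℝ => (P.comp (X + C (h:ℂ)) - P).eval (y:ℂ) := by
  funext y
  simp [dOp, Polynomial.eval_comp]

open Polynomial in
lemma natDeg_diff (P : Polynomial ℂ) (a : ℂ) {n : ℕ} (hP : P.natDegree ≤ n + 1) :
    (P.comp (X + C a) - P).natDegree ≤ n := by
  rcases Nat.eq_zero_or_pos P.natDegree with h0 | hpos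
  · rw [eq_C_of_natDegree_eq_zero h0]
    simp
  · have hP0 : P ≠ 0 := fun hh => by simp [hh] at hpos
    have hc0 : P.comp (X + C a) ≠ 0 := fun hh => by
      have := natDegree_comp (p := P) (q := X + C a)
      rw [hh] at this
      simp [natDegree_X_add_C] at this
      omega
    have hdeg : (P.comp (X + C a)).degree = P.degree := by
      rw [degree_eq_natDegree hc0, degree_eq_natDegree hP0, natDegree_comp,
        natDegree_X_add_C, mul_one]
    have hlc : (P.comp (X + C a)).leadingCoeff = P.leadingCoeff := by
      rw [leadingCoeff_comp (by rw [natDegree_X_add_C]; exact one_ne_zero)]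
      simp [leadingCoeff_X_add_C]
    have hlt : (P.comp (X + C a) - P).degree < P.degree :=
      hdeg ▸ degree_sub_lt hdeg hc0 hlc
    rcases eq_or_ne (P.comp (X + C a) - P) 0 with hz | hz
    · simp [hz]
    · have h2 : (P.comp (X + C a) - P).degree < ((n + 1 : ℕ) : WithBot ℕ) :=
        lt_of_lt_of_le hlt (degree_le_natDegree.trans (by exact_mod_cast hP))
      have := (natDegree_lt_iff_degree_lt hz).2 h2
      omega

open Polynomial in
lemma dOp_poly : ∀ (n : ℕ) (P : Polynomial ℂ), P.natDegree ≤ n → ∀ h : ℝ,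
    (dOp h)^[n+1] (fun y : ℝ => P.eval (y:ℂ)) = fun _ => 0 := by
  intro n
  induction n with
  | zero =>
    intro P hP h
    rw [eq_C_of_natDegree_le_zero hP]
    funext y
    simp [dOp]
  | succ n ih =>
    intro P hP h
    rw [Function.iterate_succ_apply, dOp_polyeval]
    exact ih _ (natDeg_diff P _ hP) h

lemma natDeg_le_of_degree_lt {p : Polynomial ℂ} {n : ℕ}
    (hp : p.degree < ((n + 1 : ℕ) : WithBot ℕ)) : p.natDegree ≤ n := by
  rcases eq_or_ne p 0 with rfl | h0
  · simp
  · have := (Polynomial.natDegree_lt_iff_degree_lt h0).2 hp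
    omega

open Polynomial in
lemma rat_agree {n : ℕ} {ψ : ℝ → ℂ} (hd : ∀ (y h : ℝ), (dOp h)^[n + 1] ψ y = 0)
    (Q : Polynomial ℂ) (hQdeg : Q.degree < ((n + 1 : ℕ) : WithBot ℕ))
    (hQnode : ∀ i : ℕ, i ∈ Finset.range (n + 1) → Q.eval (i : ℂ) = ψ i)
    (r : ℚ) : ψ (r : ℝ) = Q.eval ((r : ℝ) : ℂ) := by
  set b : ℕ := r.den with hbdef
  have hb : 0 < b := r.pos
  set M : ℕ := r.num.natAbs with hMdef
  set y₀ : ℝ := -(M : ℝ) with hy₀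
  set h : ℝ := (b : ℝ)⁻¹ with hh
  have hbR : (b : ℝ) ≠ 0 := Nat.cast_ne_zero.2 hb.ne'
  have hbC : (b : ℂ) ≠ 0 := Nat.cast_ne_zero.2 hb.ne'
  have hmint : (0 : ℤ) ≤ r.num + M * b := by
    have h1 : (M : ℤ) ≤ M * b := le_mul_of_one_le_right (Int.natCast_nonneg _) (by exact_mod_cast hb)
    omega
  set m : ℕ := (r.num + M * b).toNat with hmdef
  have hmcast : (m : ℝ) = (r.num : ℝ) + M * b := by
    have := Int.toNat_of_nonneg hmint
    exact_mod_cast congrArg (fun z : ℤ => (z : ℝ)) this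
  have hbb : (b : ℝ) * (b : ℝ)⁻¹ = 1 := mul_inv_cancel₀ hbR
  have hbbC : (b : ℂ) * (b : ℂ)⁻¹ = 1 := mul_inv_cancel₀ hbC
  have hmr : y₀ + m * h = (r : ℝ) := by
    have hr : ((r : ℝ)) = (r.num : ℝ) * (b : ℝ)⁻¹ := by
      rw [Rat.cast_def, div_eq_mul_inv]
    rw [hmcast, hy₀, hh, hr]
    linear_combination (M : ℝ) * hbb
  -- the polynomial F with F.eval m' = ψ (y₀ + m' * h)
  set F : Polynomial ℂ :=
    ∑ j ∈ Finset.range (n + 1),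
      C ((dOp h)^[j] ψ y₀ * ((j.factorial : ℂ))⁻¹) * descPochhammer ℂ j with hF
  have hFeval : ∀ m' : ℕ, F.eval (m' : ℂ) = ψ (y₀ + m' * h) := by
    intro m'
    rw [dOp_grid hd h m' y₀, hF]
    rw [eval_finset_sum]
    refine (Finset.sum_congr rfl fun j _ => ?_).symm
    rw [eval_mul, eval_C, descPochhammer_eval_eq_descFactorial,
      Nat.descFactorial_eq_factorial_mul_choose]
    have hfj : ((j.factorial : ℂ)) ≠ 0 := Nat.cast_ne_zero.2 j.factorial_ne_zero
    push_cast
    field_simp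
  set G : Polynomial ℂ := Q.comp (C ((y₀ : ℂ)) + C ((h : ℂ)) * X) with hG
  have hGeval : ∀ z : ℂ, G.eval z = Q.eval ((y₀ : ℂ) + (h : ℂ) * z) := by
    intro z; rw [hG, eval_comp]; simp
  -- degree bounds
  have hFdeg : F.degree < ((n + 1 : ℕ) : WithBot ℕ) := by
    have : F.natDegree ≤ n := by
      refine natDegree_sum_le_of_forall_le _ _ fun j hj => ?_
      refine (natDegree_mul_le).trans ?_
      rw [natDegree_C, descPochhammer_natDegree]
      simpa using Nat.lt_succ_iff.1 (Finset.mem_range.1 hj)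
    refine lt_of_le_of_lt degree_le_natDegree ?_
    exact_mod_cast Nat.lt_succ_of_le this
  have hGdeg : G.degree < ((n + 1 : ℕ) : WithBot ℕ) := by
    have hQn : Q.natDegree ≤ n := natDeg_le_of_degree_lt hQdeg
    have : G.natDegree ≤ n := by
      rw [hG, natDegree_comp]
      have hinner : (C ((y₀ : ℂ)) + C ((h : ℂ)) * X).natDegree ≤ 1 := by
        refine (natDegree_add_le _ _).trans (max_le (by simp) ?_)
        exact (natDegree_C_mul_le _ _).trans (by simp)
      calc Q.natDegree * (C ((y₀ : ℂ)) + C ((h : ℂ)) * X).natDegree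
          ≤ n * 1 := Nat.mul_le_mul hQn hinner
        _ = n := by ring
    refine lt_of_le_of_lt degree_le_natDegree ?_
    exact_mod_cast Nat.lt_succ_of_le this
  -- F = G via agreement at the n+1 points (i + M) * b
  have hgrid_pt : ∀ i : ℕ, y₀ + (((i + M) * b : ℕ) : ℝ) * h = (i : ℝ) := by
    intro i
    rw [hy₀, hh]
    push_cast
    linear_combination ((i : ℝ) + M) * hbb
  have hFG : F = G := by
    refine Polynomial.eq_of_degrees_lt_of_eval_index_eq (Finset.range (n + 1))
      (v := fun i : ℕ => (((i + M) * b : ℕ) : ℂ)) ?_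
      (by simpa using hFdeg) (by simpa using hGdeg) fun i hi => ?_
    · intro i _ j _ hij
      have h1 : ((i + M) * b : ℕ) = ((j + M) * b : ℕ) := Nat.cast_injective hij
      have := Nat.eq_of_mul_eq_mul_right hb h1
      omega
    · rw [hFeval ((i + M) * b), hGeval, hgrid_pt i]
      have hcz : ((y₀ : ℂ) + (h : ℂ) * (((i + M) * b : ℕ) : ℂ)) = (i : ℂ) := by
        rw [hy₀, hh]
        push_cast
        linear_combination ((i : ℂ) + M) * hbbC
      rw [hcz, hQnode i hi]
  -- conclude
  have hmain := hFeval m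
  rw [hmr] at hmain
  rw [← hmain, hFG, hGeval]
  congr 1
  rw [← hmr]
  push_cast
  ring

open Polynomial in
/-- a continuous `ψ : ℝ → ℂ` is a polynomial in the
finite-difference sense (`Δ_h^{n+1} ψ ≡ 0` for all `h`) if and only if it is
an ordinary polynomial function of degree at most `n`. -/
theorem stmt3 (n : ℕ) (ψ : ℝ → ℂ) :
    (Continuous ψ ∧ ∀ (y h : ℝ), (dOp h)^[n + 1] ψ y = 0) ↔
      ∃ c : Fin (n + 1) → ℂ, ∀ y : ℝ, ψ y = ∑ i : Fin (n + 1), c i * (y : ℂ) ^ (i : ℕ) := by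
  constructor
  · rintro ⟨hc, hd⟩
    set Q : Polynomial ℂ :=
      Lagrange.interpolate (Finset.range (n + 1)) (fun i : ℕ => (i : ℂ)) (fun i : ℕ => ψ i) with hQ
    have hinj : Set.InjOn (fun i : ℕ => (i : ℂ)) ↑(Finset.range (n + 1)) :=
      fun a _ c _ hac => Nat.cast_injective hac
    have hQdeg : Q.degree < ((n + 1 : ℕ) : WithBot ℕ) := by
      have := Lagrange.degree_interpolate_lt (s := Finset.range (n + 1))
        (v := fun i : ℕ => (i : ℂ)) (fun i : ℕ => ψ i) hinj
      simpa [hQ] using this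
    have hQnode : ∀ i : ℕ, i ∈ Finset.range (n + 1) → Q.eval (i : ℂ) = ψ i :=
      fun i hi => Lagrange.eval_interpolate_at_node _ hinj hi
    have hagree : ∀ r : ℚ, ψ r = Q.eval ((r : ℝ) : ℂ) := rat_agree hd Q hQdeg hQnode
    have hext : ψ = fun x : ℝ => Q.eval ((x : ℝ) : ℂ) := by
      refine Continuous.ext_on Rat.denseRange_cast hc
        (Q.continuous.comp Complex.continuous_ofReal) ?_
      rintro x ⟨r, rfl⟩
      exact hagree r
    have hnd : Q.natDegree < n + 1 := Nat.lt_succ_of_le (natDeg_le_of_degree_lt hQdeg)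
    refine ⟨fun i => Q.coeff i, fun y => ?_⟩
    rw [congrFun hext y, eval_eq_sum_range' hnd]
    exact (Fin.sum_univ_eq_sum_range (fun i => Q.coeff i * (y : ℂ) ^ i) (n + 1)).symm
  · rintro ⟨c, hcψ⟩
    set P : Polynomial ℂ := ∑ i : Fin (n + 1), C (c i) * X ^ (i : ℕ) with hP
    have hψP : ψ = fun y : ℝ => P.eval ((y : ℝ) : ℂ) := by
      funext y
      rw [hcψ y, hP]
      simp [eval_finset_sum]
    have hPdeg : P.natDegree ≤ n := by
      refine natDegree_sum_le_of_forall_le _ _ fun i _ => ?_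
      refine (natDegree_C_mul_le _ _).trans ?_
      simpa using Nat.lt_succ_iff.1 i.isLt
    constructor
    · rw [hψP]
      exact P.continuous.comp Complex.continuous_ofReal
    · intro y h
      rw [hψP]
      exact congrFun (dOp_poly n P hPdeg h) y
end

section
/- Let ψ₁, …, ψₙ : ℝ → ℂ be continuous functions and let α_{ji} (j = 1,…,m, i = 1,…,n) be nonzero real numbers such that for every i ≠ l the vectors (α_{1i},…,α_{mi}) and (α_{1l},…,α_{ml}) are not proportional. If Σ_{i=1}^n ψᵢ(α_{1i}y₁ + ⋯ + α_{mi}yₘ) = Σ_{j=1}^m sⱼ(y₁,…,y_{j-1},y_{j+1},…,yₘ) for all y₁,…,yₘ ∈ ℝ and some functions sⱼ : ℝ^{m-1} → ℂ, then each ψᵢ is an ordinary polynomial. -/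
open Finset Polynomial Function fwdDiff

section chain

variable {V W : Type*} [AddCommMonoid V] [AddCommMonoid W]

/-- Iterated forward difference along a list of increments. -/
def Dch (L : List V) (F : V → ℂ) : V → ℂ := L.foldr fwdDiff F

lemma Dch_nil (F : V → ℂ) : Dch ([] : List V) F = F := rfl

lemma Dch_cons (v : V) (L : List V) (F : V → ℂ) :
    Dch (v :: L) F = fwdDiff v (Dch L F) := rfl

lemma Dch_sum {ι : Type*} (L : List V) (t : Finset ι) (F : ι → V → ℂ) :
    Dch L (fun y => ∑ i ∈ t, F i y) = fun y => ∑ i ∈ t, Dch L (F i) y := by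
  induction L with
  | nil => rfl
  | cons v L ih =>
      rw [Dch_cons, ih]
      funext y
      simp [fwdDiff, Dch_cons, Finset.sum_sub_distrib]

lemma Dch_per (v : V) (F : V → ℂ) (hF : ∀ y, F (y + v) = F y) (L : List V) :
    ∀ y, Dch L F (y + v) = Dch L F y := by
  induction L with
  | nil => exact hF
  | cons w L ih =>
      intro y
      simp only [Dch_cons, fwdDiff]
      rw [add_right_comm, ih (y + w), ih y]

lemma Dch_zero_of_mem (v : V) (L : List V) (F : V → ℂ) (hv : v ∈ L)
    (hF : ∀ y, F (y + v) = F y) : Dch L F = fun _ => 0 := by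
  induction L with
  | nil => cases hv
  | cons w L ih =>
      rcases List.mem_cons.1 hv with h | h
      · subst h
        funext y
        simp only [Dch_cons, fwdDiff]
        rw [Dch_per v F hF L y, sub_self]
      · rw [Dch_cons, ih h]
        funext y; simp [fwdDiff]

lemma Dch_comp (ℓ : V → W) (hℓ : ∀ a b, ℓ (a + b) = ℓ a + ℓ b)
    (L : List V) (g : W → ℂ) :
    Dch L (fun y => g (ℓ y)) = fun y => Dch (L.map ℓ) g (ℓ y) := by
  induction L with
  | nil => rfl
  | cons v L ih =>
      funext y
      simp only [Dch_cons, List.map_cons, fwdDiff, ih, hℓ]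

lemma Dch_replicate (h : V) (k : ℕ) (F : V → ℂ) :
    Dch (List.replicate k h) F = (fwdDiff h)^[k] F := by
  induction k with
  | zero => rfl
  | succ k ih =>
      rw [List.replicate_succ, Dch_cons, ih, Function.iterate_succ_apply']

end chain


lemma iter_zero_fun (h : ℝ) (r : ℕ) :
    (fwdDiff h)^[r] (fun _ : ℝ => (0:ℂ)) = fun _ => 0 := by
  induction r with
  | zero => rfl
  | succ r ih => rw [Function.iterate_succ_apply', ih]; funext x; simp [fwdDiff]

lemma cont_poly (f : ℝ → ℂ) (hf : Continuous f) (N : ℕ) (hN : 0 < N)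
    (H : ∀ h x, (fwdDiff h)^[N] f x = 0) :
    ∃ p : Polynomial ℂ, ∀ y : ℝ, f y = Polynomial.eval (y : ℂ) p := by
  -- all higher iterates vanish
  have H' : ∀ j, N ≤ j → ∀ (h : ℝ), (fwdDiff h)^[j] f = fun _ => 0 := by
    intro j hj h
    obtain ⟨r, rfl⟩ := Nat.exists_eq_add_of_le hj
    rw [Nat.add_comm, Function.iterate_add_apply]
    rw [show (fwdDiff h)^[N] f = fun _ => 0 from funext (H h)]
    exact iter_zero_fun h r
  -- Gregory-Newton with truncation at N
  have grid : ∀ (x0 h : ℝ) (k : ℕ),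
      f (x0 + k * h) = ∑ j ∈ range N, (k.choose j : ℂ) * (fwdDiff h)^[j] f x0 := by
    intro x0 h k
    have e0 := shift_eq_sum_fwdDiff_iter h f k x0
    rw [nsmul_eq_mul] at e0
    have e1 : ∑ j ∈ range (k + 1), k.choose j • (fwdDiff h)^[j] f x0
        = ∑ j ∈ range (k + 1 + N), (k.choose j : ℂ) * (fwdDiff h)^[j] f x0 := by
      rw [Finset.sum_subset (Finset.range_subset_range.2 (Nat.le_add_right _ _))]
      · exact Finset.sum_congr rfl fun j _ => by rw [nsmul_eq_mul]
      · intro j _ hj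
        simp only [Finset.mem_range, not_lt] at hj
        rw [Nat.choose_eq_zero_of_lt (by omega)]
        simp
    have e2 : ∑ j ∈ range (k + 1 + N), (k.choose j : ℂ) * (fwdDiff h)^[j] f x0
        = ∑ j ∈ range N, (k.choose j : ℂ) * (fwdDiff h)^[j] f x0 := by
      refine (Finset.sum_subset (Finset.range_subset_range.2 (by omega)) ?_).symm
      intro j _ hj
      simp only [Finset.mem_range, not_lt] at hj
      rw [H' j hj h]
      simp
    rw [e0, e1, e2]
  -- the interpolating polynomial for base point x0, step h
  set P : ℝ → ℝ → Polynomial ℂ := fun x0 h =>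
    ∑ j ∈ range N, Polynomial.C ((fwdDiff h)^[j] f x0 / (j.factorial : ℂ)) *
      (descPochhammer ℂ j).comp (Polynomial.C ((h : ℂ)⁻¹) * (X - Polynomial.C (x0 : ℂ)))
    with hP
  have agree : ∀ (x0 h : ℝ), h ≠ 0 → ∀ k : ℕ,
      f (x0 + k * h) = (P x0 h).eval ((x0 + k * h : ℝ) : ℂ) := by
    intro x0 h hh k
    rw [grid x0 h k, hP]
    rw [Polynomial.eval_finset_sum]
    refine Finset.sum_congr rfl fun j _ => ?_
    rw [Polynomial.eval_mul, Polynomial.eval_C, Polynomial.eval_comp]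
    have hhc : (h : ℂ) ≠ 0 := by exact_mod_cast (Complex.ofReal_ne_zero.2 hh)
    have earg : Polynomial.eval ((x0 + k * h : ℝ) : ℂ)
        (Polynomial.C ((h:ℂ)⁻¹) * (X - Polynomial.C (x0:ℂ))) = (k : ℂ) := by
      simp only [Polynomial.eval_mul, Polynomial.eval_C, Polynomial.eval_sub, Polynomial.eval_X]
      push_cast
      field_simp
      ring
    rw [earg, descPochhammer_eval_eq_descFactorial ℂ k j]
    have hfac : ((j.factorial : ℂ)) ≠ 0 := by
      exact_mod_cast Nat.cast_ne_zero.2 j.factorial_ne_zero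
    rw [Nat.descFactorial_eq_factorial_mul_choose]
    push_cast
    field_simp
  -- all grid polynomials agree with `P 0 1`
  have hQnat : ∀ nn : ℕ, f nn = (P 0 1).eval (nn : ℂ) := by
    intro nn
    have := agree 0 1 one_ne_zero nn
    simpa using this
  have main : ∀ (M ss : ℕ), P (-(M:ℝ)) (1/(ss+1)) = P 0 1 := by
    intro M ss
    apply Polynomial.eq_of_infinite_eval_eq
    apply Set.infinite_of_injective_forall_mem (f := fun nn : ℕ => (nn : ℂ))
      (hi := Nat.cast_injective)
    intro nn
    have hs1 : ((ss:ℝ) + 1) ≠ 0 := by positivity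
    have hx : -(M:ℝ) + ((nn + M) * (ss+1) : ℕ) * (1/(ss+1)) = (nn : ℝ) := by
      push_cast
      field_simp
      ring
    have h1 := agree (-(M:ℝ)) (1/(ss+1)) (by positivity) ((nn + M) * (ss+1))
    rw [hx] at h1
    show (P (-(M:ℝ)) (1/(ss+1))).eval _ = (P 0 1).eval _
    rw [← hQnat nn, h1]
    norm_num
  -- density argument
  refine ⟨P 0 1, fun x => ?_⟩
  obtain ⟨M, hM⟩ : ∃ M : ℕ, -(M:ℝ) ≤ x := by
    obtain ⟨M, hM⟩ := exists_nat_ge (-x)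
    exact ⟨M, by linarith⟩
  set t : ℝ := x + M with ht
  have htpos : 0 ≤ t := by simp [ht]; linarith
  set u : ℕ → ℝ := fun ss => -(M:ℝ) + (⌊t * (ss+1)⌋₊ : ℕ) * (1/(ss+1)) with hu
  have hfu : ∀ ss, f (u ss) = (P 0 1).eval ((u ss : ℝ) : ℂ) := by
    intro ss
    rw [hu]
    have := agree (-(M:ℝ)) (1/(ss+1)) (by positivity) ⌊t * (ss+1)⌋₊
    rw [main M ss] at this
    exact this
  have hulim : Filter.Tendsto u Filter.atTop (nhds x) := by
    have hbound : ∀ ss : ℕ, |u ss - x| ≤ 1/(ss+1) := by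
      intro ss
      have hs1 : (0:ℝ) < (ss:ℝ) + 1 := by positivity
      have hs0 : ((ss:ℝ) + 1) ≠ 0 := ne_of_gt hs1
      have hfl1 : (⌊t * (ss+1)⌋₊ : ℝ) ≤ t * (ss+1) := Nat.floor_le (by positivity)
      have hfl2 : t * (ss+1) < (⌊t * (ss+1)⌋₊ : ℝ) + 1 := Nat.lt_floor_add_one _
      have hux : u ss - x = ((⌊t * (ss+1)⌋₊ : ℝ) - t * ((ss:ℝ)+1)) / ((ss:ℝ)+1) := by
        rw [hu, ht]
        field_simp
        ring
      have hnum : |(⌊t * (ss+1)⌋₊ : ℝ) - t * ((ss:ℝ)+1)| ≤ 1 := by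
        rw [abs_le]; constructor <;> linarith
      calc |u ss - x| = |(⌊t * (ss+1)⌋₊ : ℝ) - t * ((ss:ℝ)+1)| / ((ss:ℝ)+1) := by
            rw [hux, abs_div, abs_of_pos hs1]
        _ ≤ 1 / ((ss:ℝ)+1) := by gcongr
    have h0 : Filter.Tendsto (fun ss : ℕ => 1/((ss:ℝ)+1)) Filter.atTop (nhds 0) :=
      tendsto_one_div_add_atTop_nhds_zero_nat
    have : Filter.Tendsto (fun ss => u ss - x) Filter.atTop (nhds 0) := by
      apply squeeze_zero_norm hbound h0
    simpa using this.add_const x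
  have l1 : Filter.Tendsto (fun ss => f (u ss)) Filter.atTop (nhds (f x)) :=
    (hf.continuousAt.tendsto).comp hulim
  have hc : Continuous fun y : ℝ => (P 0 1).eval ((y : ℝ) : ℂ) :=
    ((P 0 1).continuous).comp Complex.continuous_ofReal
  have l2 : Filter.Tendsto (fun ss => (P 0 1).eval ((u ss : ℝ) : ℂ)) Filter.atTop
      (nhds ((P 0 1).eval ((x : ℝ) : ℂ))) := (hc.continuousAt.tendsto).comp hulim
  rw [show (fun ss => f (u ss)) = fun ss => (P 0 1).eval ((u ss : ℝ) : ℂ) from funext hfu] at l1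
  exact tendsto_nhds_unique l1 l2


lemma sum_mul_single {m : ℕ} (f : Fin m → ℝ) (j' : Fin m) (a : ℝ) :
    ∑ j, f j * (Pi.single j' a : Fin m → ℝ) j = f j' * a := by
  rw [Finset.sum_eq_single j']
  · rw [Pi.single_eq_same]
  · intro b _ hb; rw [Pi.single_eq_of_ne hb, mul_zero]
  · intro hmem; exact absurd (Finset.mem_univ j') hmem

lemma exists_orth {m n : ℕ} (hm : 1 ≤ m) (α : Fin m → Fin n → ℝ)
    (hα : ∀ j i, α j i ≠ 0) (i l : Fin n)
    (hpr : ¬ ∃ c : ℝ, ∀ j : Fin m, α j l = c * α j i) (c : ℝ) :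
    ∃ v : Fin m → ℝ, (∑ j, α j l * v j) = 0 ∧ (∑ j, α j i * v j) = c := by
  classical
  set j0 : Fin m := ⟨0, hm⟩ with hj0
  obtain ⟨j1, hj1⟩ : ∃ j1, α j1 l ≠ (α j0 l / α j0 i) * α j1 i := by
    by_contra hcon
    push_neg at hcon
    exact hpr ⟨α j0 l / α j0 i, hcon⟩
  have hd : α j0 l * α j1 i - α j1 l * α j0 i ≠ 0 := by
    intro h0
    apply hj1
    rw [div_mul_eq_mul_div, eq_div_iff (hα j0 i)]
    linarith
  set d := α j0 l * α j1 i - α j1 l * α j0 i with hd_def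
  refine ⟨(Pi.single j0 (-(α j1 l) * c / d) : Fin m → ℝ)
      + (Pi.single j1 (α j0 l * c / d) : Fin m → ℝ), ?_, ?_⟩
  · simp only [Pi.add_apply, mul_add, Finset.sum_add_distrib, sum_mul_single]
    field_simp [hd]
    ring
  · simp only [Pi.add_apply, mul_add, Finset.sum_add_distrib, sum_mul_single]
    field_simp [hd]
    rw [hd_def]
    ring


section helpers

def ell {m n : ℕ} (α : Fin m → Fin n → ℝ) (l : Fin n) (y : Fin m → ℝ) : ℝ :=
  ∑ j, α j l * y j

lemma ell_add {m n : ℕ} (α : Fin m → Fin n → ℝ) (l : Fin n) (a b : Fin m → ℝ) :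
    ell α l (a + b) = ell α l a + ell α l b := by
  simp [ell, mul_add, Finset.sum_add_distrib]

lemma ell_single {m n : ℕ} (α : Fin m → Fin n → ℝ) (l : Fin n) (j : Fin m) (c : ℝ) :
    ell α l (Pi.single j c) = α j l * c := by
  classical
  rw [ell, Finset.sum_eq_single j]
  · rw [Pi.single_eq_same]
  · intro b _ hb; rw [Pi.single_eq_of_ne hb, mul_zero]
  · intro hmem; exact absurd (Finset.mem_univ j) hmem

end helpers

/-- real-line case of Lemma 2: if continuous functions
`ψ₁, …, ψₙ : ℝ → ℂ` satisfy
`∑ᵢ ψᵢ(α_{1i}y₁ + ⋯ + α_{mi}yₘ) = ∑ⱼ sⱼ(y₁,…,ŷⱼ,…,yₘ)` with nonzero,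
pairwise non-proportional coefficient vectors, then each `ψᵢ` is an ordinary
polynomial. -/
theorem stmt4 (m n : ℕ) (hm : 1 ≤ m) (hn : 1 ≤ n)
    (ψ : Fin n → ℝ → ℂ) (hψ : ∀ i, Continuous (ψ i))
    (α : Fin m → Fin n → ℝ) (hα : ∀ j i, α j i ≠ 0)
    (hprop : ∀ i l : Fin n, i ≠ l → ¬ ∃ c : ℝ, ∀ j : Fin m, α j l = c * α j i)
    (s : Fin m → (Fin m → ℝ) → ℂ)
    (hs : ∀ (j : Fin m) (y y' : Fin m → ℝ), (∀ k, k ≠ j → y k = y' k) → s j y = s j y')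
    (heq : ∀ y : Fin m → ℝ,
      ∑ i, ψ i (∑ j, α j i * y j) = ∑ j, s j y) :
    ∀ i, ∃ p : Polynomial ℂ, ∀ y : ℝ, ψ i y = Polynomial.eval (y : ℂ) p := by
  classical
  intro i
  refine cont_poly (ψ i) (hψ i) (m + n) (by omega) ?_
  intro h x
  set j0 : Fin m := ⟨0, hm⟩ with hj0
  -- coordinate-direction increments (kill the s j's)
  set w : Fin m → (Fin m → ℝ) := fun j => Pi.single j (h / α j i) with hw
  have hwl : ∀ j, ell α i (w j) = h := by
    intro j
    rw [hw]
    simp only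
    rw [ell_single]
    field_simp
    exact mul_div_cancel_left₀ h (hα j i)
  -- increments orthogonal to the other α-vectors
  have hvex : ∀ l : Fin n, ∃ v : Fin m → ℝ,
      ell α i v = h ∧ (l ≠ i → ell α l v = 0) := by
    intro l
    by_cases hl : l = i
    · exact ⟨w j0, hwl j0, fun hc => absurd hl hc⟩
    · obtain ⟨v, hv0, hvh⟩ :=
        exists_orth hm α hα i l (hprop i l (fun he => hl (he.symm))) h
      exact ⟨v, hvh, fun _ => hv0⟩
  choose v hvl hv0 using hvex
  set L : List (Fin m → ℝ) := (List.ofFn w) ++ (List.ofFn v) with hL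
  -- the functional equation as an equation of functions
  have hEfun : (fun y => ∑ i', ψ i' (ell α i' y)) = (fun y => ∑ j, s j y) :=
    funext heq
  have hD := congrArg (Dch L) hEfun
  -- right-hand side is annihilated
  have hRHS : Dch L (fun y => ∑ j, s j y) = fun _ => 0 := by
    rw [Dch_sum L Finset.univ s]
    funext y
    apply Finset.sum_eq_zero
    intro j _
    have hmem : w j ∈ L := List.mem_append.2 (Or.inl (List.mem_ofFn.2 ⟨j, rfl⟩))
    have hper : ∀ y', s j (y' + w j) = s j y' := by
      intro y'
      apply hs j
      intro k hk
      rw [hw]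
      simp [Pi.single_eq_of_ne hk]
    rw [Dch_zero_of_mem (w j) L (s j) hmem hper]
  -- left-hand side via composition
  have hLHS : Dch L (fun y => ∑ i', ψ i' (ell α i' y))
      = fun y => ∑ i', Dch (L.map (ell α i')) (ψ i') (ell α i' y) := by
    rw [Dch_sum L Finset.univ (fun i' y => ψ i' (ell α i' y))]
    funext y
    refine Finset.sum_congr rfl fun i' _ => ?_
    rw [Dch_comp (ell α i') (ell_add α i') L (ψ i')]
  have hz : ∀ y, ∑ i', Dch (L.map (ell α i')) (ψ i') (ell α i' y) = 0 := by
    intro y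
    have h1 : (fun y => ∑ i', Dch (L.map (ell α i')) (ψ i') (ell α i' y))
        = fun _ => 0 := by rw [← hLHS, hD, hRHS]
    exact congrFun h1 y
  -- the other ψ's are annihilated
  have hkill : ∀ i', i' ≠ i → Dch (L.map (ell α i')) (ψ i') = fun _ => 0 := by
    intro i' hi'
    apply Dch_zero_of_mem (0 : ℝ)
    · refine List.mem_map.2 ⟨v i', ?_, hv0 i' hi'⟩
      exact List.mem_append.2 (Or.inr (List.mem_ofFn.2 ⟨i', rfl⟩))
    · intro y; rw [add_zero]
  -- the mapped list for index i is constant h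
  have hmap : L.map (ell α i) = List.replicate (m + n) h := by
    apply List.eq_replicate_iff.2
    constructor
    · simp [hL]
    · intro b hb
      obtain ⟨a, ha, rfl⟩ := List.mem_map.1 hb
      rcases List.mem_append.1 ha with h1 | h1
      · obtain ⟨j, rfl⟩ := List.mem_ofFn.1 h1
        exact hwl j
      · obtain ⟨l, rfl⟩ := List.mem_ofFn.1 h1
        exact hvl l
  -- surjectivity of ell α i
  set y0 : Fin m → ℝ := Pi.single j0 (x / α j0 i) with hy0
  have hy0x : ell α i y0 = x := by
    rw [hy0, ell_single]
    field_simp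
    exact mul_div_cancel_left₀ x (hα j0 i)
  -- conclude
  have hfin := hz y0
  rw [Finset.sum_eq_single i
    (fun i' _ hi' => by rw [hkill i' hi']) (fun hni => absurd (Finset.mem_univ i) hni)] at hfin
  rw [hmap, hy0x, Dch_replicate] at hfin
  exact hfin
end

section
/- Let X = ℝ (or any LCA group), and for topological automorphisms α_{ji} of X (j=1,…,m; i=1,…,n) put Gᵢ = {(α_{1i}x,…,α_{mi}x) : x ∈ X}. Then each Gᵢ is a closed subgroup of X^m, and for fixed i ≠ l the condition Gᵢ ∩ G_l = {0} holds if and only if ⋂_{p,k=1}^m Ker(α_{ki}^{-1}α_{kl} − α_{pi}^{-1}α_{pl}) = {0}. -/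
/-- for topological automorphisms `α_{ji}` of a locally compact
abelian group `X`, the subgroups `Gᵢ = {(α_{1i}x,…,α_{mi}x) : x ∈ X}` are
closed in `X^m`, and for `i ≠ l` the condition `Gᵢ ∩ G_l = {0}` is equivalent
to `⋂_{p,k} Ker (α_{ki}⁻¹ α_{kl} − α_{pi}⁻¹ α_{pl}) = {0}`. -/
theorem stmt13 {X : Type*} [AddCommGroup X] [TopologicalSpace X] [IsTopologicalAddGroup X]
    [LocallyCompactSpace X] [T2Space X]
    (m n : ℕ) (hm : 1 ≤ m) (α : Fin m → Fin n → X ≃+ X)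
    (hαc : ∀ j i, Continuous (α j i)) (hαc' : ∀ j i, Continuous (α j i).symm) :
    (∀ i : Fin n, IsClosed (Set.range fun x : X => fun j : Fin m => α j i x)) ∧
    (∀ i l : Fin n, i ≠ l →
      ((Set.range fun x : X => fun j : Fin m => α j i x) ∩
        (Set.range fun x : X => fun j : Fin m => α j l x) = {0} ↔
      (⋂ p : Fin m, ⋂ k : Fin m,
        {x : X | (α k i).symm (α k l x) - (α p i).symm (α p l x) = 0}) = {0})) := by
  set j₀ : Fin m := ⟨0, hm⟩ with hj₀
  constructor
  · intro i
    have hrange : (Set.range fun x : X => fun j : Fin m => α j i x)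
        = ⋂ j : Fin m, {f : Fin m → X | f j = α j i ((α j₀ i).symm (f j₀))} := by
      ext f
      simp only [Set.mem_range, Set.mem_iInter, Set.mem_setOf_eq]
      constructor
      · rintro ⟨x, rfl⟩ j
        simp
      · intro h
        exact ⟨(α j₀ i).symm (f j₀), funext fun j => (h j).symm⟩
    rw [hrange]
    apply isClosed_iInter
    intro j
    exact isClosed_eq (continuous_apply j)
      ((hαc j i).comp ((hαc' j₀ i).comp (continuous_apply j₀)))
  · intro i l _
    constructor
    · intro h
      apply Set.eq_singleton_iff_unique_mem.mpr
      refine ⟨by simp, ?_⟩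
      intro y hy
      simp only [Set.mem_iInter, Set.mem_setOf_eq] at hy
      have hx : ∀ k : Fin m, (α k i).symm (α k l y) = (α j₀ i).symm (α j₀ l y) := by
        intro k
        have := hy j₀ k
        exact sub_eq_zero.mp this
      have hf : (fun j : Fin m => α j l y) ∈
          (Set.range fun x : X => fun j : Fin m => α j i x) ∩
          (Set.range fun x : X => fun j : Fin m => α j l x) := by
        constructor
        · refine ⟨(α j₀ i).symm (α j₀ l y), funext fun j => ?_⟩
          rw [← hx j]
          simp
        · exact ⟨y, rfl⟩
      rw [h] at hf
      have h0 : α j₀ l y = 0 := congrFun hf j₀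
      have := (α j₀ l).injective (by simpa using h0)
      simpa using this
    · intro hK
      apply Set.eq_singleton_iff_unique_mem.mpr
      constructor
      · exact ⟨⟨0, by funext j; simp⟩, ⟨0, by funext j; simp⟩⟩
      · rintro f ⟨⟨x, hx⟩, ⟨y, hy⟩⟩
        have hy0 : y = 0 := by
          have hmem : y ∈ (⋂ p : Fin m, ⋂ k : Fin m,
              {x : X | (α k i).symm (α k l x) - (α p i).symm (α p l x) = 0}) := by
            simp only [Set.mem_iInter, Set.mem_setOf_eq]
            intro p k
            have hk : α k l y = f k := congrFun hy k
            have hk' : α k i x = f k := congrFun hx k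
            have hp : α p l y = f p := congrFun hy p
            have e1 : (α k i).symm (α k l y) = x := by
              rw [hk, ← hk']; simp
            have e2 : (α p i).symm (α p l y) = x := by
              rw [hp, ← congrFun hx p]; simp
            rw [e1, e2, sub_self]
          rw [hK] at hmem
          simpa using hmem
        subst hy0
        rw [← hy]
        funext j
        simp
end

section
/- Let ψ₁, …, ψₙ : ℝ → ℂ be continuous, let α_{ji} be nonzero reals with the vectors (α_{1i},…,α_{mi}) pairwise non-proportional, let p : ℝ^m → ℂ be an ordinary polynomial, and suppose Σ_{i=1}^n ψᵢ(α_{1i}y₁+⋯+α_{mi}yₘ) = Σ_{j=1}^m sⱼ(y₁,…,y_{j-1},y_{j+1},…,yₘ) + p(y₁,…,yₘ) for all yⱼ ∈ ℝ. Then each ψᵢ is an ordinary polynomial. -/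
noncomputable section

namespace Stmt16

section OneD
open Polynomial


/-- one-dimensional forward difference -/
def del (h : ℝ) (f : ℝ → ℂ) : ℝ → ℂ := fun x => f (x + h) - f x

def iterD : List ℝ → (ℝ → ℂ) → (ℝ → ℂ)
  | [], f => f
  | h :: t, f => iterD t (del h f)

lemma iterD_nil (f : ℝ → ℂ) : iterD [] f = f := rfl

lemma iterD_cons (h : ℝ) (t : List ℝ) (f : ℝ → ℂ) :
    iterD (h :: t) f = iterD t (del h f) := rfl

lemma del_comm (h k : ℝ) (f : ℝ → ℂ) : del h (del k f) = del k (del h f) := by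
  funext x
  simp only [del]
  rw [add_right_comm]
  ring

lemma del_zero_fun (h : ℝ) : del h (fun _ => (0:ℂ)) = fun _ => 0 := by
  funext x; simp [del]

lemma iterD_zero_fun (l : List ℝ) : iterD l (fun _ => (0:ℂ)) = fun _ => 0 := by
  induction l with
  | nil => rfl
  | cons a t ih => rw [iterD_cons, del_zero_fun, ih]

lemma iterD_del (l : List ℝ) (h : ℝ) (f : ℝ → ℂ) :
    iterD l (del h f) = del h (iterD l f) := by
  induction l generalizing f with
  | nil => rfl
  | cons a t ih => rw [iterD_cons, del_comm, ih, iterD_cons]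

lemma iterD_eq_zero_of_mem (l : List ℝ) (h : ℝ) (hmem : h ∈ l) (f : ℝ → ℂ)
    (hz : del h f = fun _ => 0) : iterD l f = fun _ => 0 := by
  induction l generalizing f with
  | nil => simp at hmem
  | cons a t ih =>
    rw [iterD_cons]
    rcases List.mem_cons.mp hmem with rfl | hmem'
    · rw [hz, iterD_zero_fun]
    · apply ih hmem'
      rw [del_comm, hz, del_zero_fun]

lemma del_zero_step (f : ℝ → ℂ) : del 0 f = fun _ => 0 := by
  funext x; simp [del]

lemma continuous_del (h : ℝ) (f : ℝ → ℂ) (hf : Continuous f) : Continuous (del h f) :=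
  (hf.comp (continuous_id.add continuous_const)).sub hf

/-- discrete antiderivative of a polynomial -/
lemma exists_antider (Q : ℂ[X]) : ∃ R : ℂ[X], R.comp (X + C 1) - R = Q := by
  suffices H : ∀ (N : ℕ) (Q : ℂ[X]), Q.natDegree ≤ N → ∃ R, R.comp (X + C 1) - R = Q from
    H Q.natDegree Q le_rfl
  intro N
  induction N with
  | zero =>
    intro Q hQ
    refine ⟨C (Q.coeff 0) * X, ?_⟩
    rw [Polynomial.eq_C_of_natDegree_le_zero hQ]
    simp [mul_comp, mul_add]
  | succ N ih =>
    intro Q hQ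
    set c : ℂ := Q.coeff (N + 1) with hc
    set R₀ : ℂ[X] := C (c / (N + 2)) * X ^ (N + 2) with hR₀
    have hT : R₀.comp (X + C 1) - R₀ = C (c / (N + 2)) * ((X + 1) ^ (N + 2) - X ^ (N + 2)) := by
      rw [hR₀]
      simp [mul_comp, pow_comp, mul_sub, Polynomial.C_1]
    have hcoeff : ∀ k, N < k →
        (Q - (R₀.comp (X + C 1) - R₀)).coeff k = 0 := by
      intro k hk
      have hch : ((X + 1 : ℂ[X]) ^ (N + 2)).coeff k = (Nat.choose (N + 2) k : ℂ) :=
        Polynomial.coeff_X_add_one_pow ℂ (N + 2) k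
      rcases eq_or_lt_of_le (Nat.succ_le_of_lt hk) with hk1 | hk1
      · -- k = N + 1
        have hk1 : k = N + 1 := hk1.symm
        subst hk1
        rw [Polynomial.coeff_sub, hT, Polynomial.coeff_C_mul, Polynomial.coeff_sub, hch,
          Polynomial.coeff_X_pow]
        have : (N:ℂ) + 2 ≠ 0 := by
          have : ((N + 2 : ℕ) : ℂ) ≠ 0 := Nat.cast_ne_zero.mpr (by omega)
          push_cast at this; exact this
        simp only [Nat.choose_succ_self_right]
        rw [if_neg (by omega)]
        push_cast
        field_simp
        rw [← hc]; ring
      · -- k > N + 1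
        have hQk : Q.coeff k = 0 := Polynomial.coeff_eq_zero_of_natDegree_lt (lt_of_le_of_lt hQ hk1)
        rw [Polynomial.coeff_sub, hT, Polynomial.coeff_C_mul, Polynomial.coeff_sub, hch,
          Polynomial.coeff_X_pow, hQk]
        rcases eq_or_lt_of_le (Nat.succ_le_of_lt hk1) with hk2 | hk2
        · rw [if_pos hk2.symm, ← hk2, Nat.choose_self]; simp
        · rw [if_neg (by omega), Nat.choose_eq_zero_of_lt hk2]; simp
    have hQ' : (Q - (R₀.comp (X + C 1) - R₀)).natDegree ≤ N :=
      Polynomial.natDegree_le_iff_coeff_eq_zero.mpr hcoeff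
    obtain ⟨R', hR'⟩ := ih _ hQ'
    exact ⟨R₀ + R', by rw [Polynomial.add_comp]; rw [sub_eq_iff_eq_add] at hR' ⊢; linear_combination hR'⟩



/-- Core analytic lemma -/
lemma poly_of_iterD_eq_zero : ∀ (M : ℕ) (f : ℝ → ℂ), Continuous f →
    (∀ l : List ℝ, l.length = M → iterD l f = fun _ => 0) →
    ∃ q : ℂ[X], ∀ x : ℝ, f x = q.eval (x : ℂ) := by
  intro M
  induction M with
  | zero =>
    intro f _ H
    exact ⟨0, fun x => by simpa [iterD_nil] using congrFun (H [] rfl) x⟩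
  | succ M ih =>
    intro f hf H
    have key : ∀ h : ℝ, ∃ q : ℂ[X], ∀ x : ℝ, del h f x = q.eval (x:ℂ) := by
      intro h
      refine ih (del h f) (continuous_del h f hf) (fun l hl => ?_)
      rw [← iterD_cons]
      exact H (h :: l) (by simp [hl])
    choose q hq using key
    obtain ⟨R, hR⟩ := exists_antider (q 1)
    set g : ℝ → ℂ := fun x => f x - R.eval (x:ℂ) with hgdef
    have hgc : Continuous g :=
      hf.sub (R.continuous.comp Complex.continuous_ofReal)
    have evalcomp : ∀ (h x : ℝ), (R.comp (X + C (h:ℂ))).eval (x:ℂ) = R.eval ((x + h : ℝ) : ℂ) := by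
      intro h x
      rw [Polynomial.eval_comp]
      push_cast
      simp
    have hper : ∀ x : ℝ, g (x + 1) = g x := by
      intro x
      have h1 : f (x + 1) - f x = (q 1).eval (x:ℂ) := hq 1 x
      have h2 := congrArg (Polynomial.eval (x:ℂ)) hR
      rw [Polynomial.eval_sub] at h2
      have h3 : (R.comp (X + C 1)).eval (x:ℂ) = R.eval ((x + 1 : ℝ) : ℂ) := by
        simpa using evalcomp 1 x
      rw [h3] at h2
      simp only [hgdef]
      linear_combination h1 - h2
    have hconst : ∀ h x : ℝ, g (x + h) - g x = g h - g 0 := by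
      intro h
      set r : ℂ[X] := q h - (R.comp (X + C (h:ℂ)) - R) with hrdef
      have hr : ∀ x : ℝ, g (x + h) - g x = r.eval (x:ℂ) := by
        intro x
        have h1 : f (x + h) - f x = (q h).eval (x:ℂ) := hq h x
        simp only [hgdef, hrdef, Polynomial.eval_sub, evalcomp h x]
        rw [← h1]
        ring
      have hper2 : ∀ x : ℝ, r.eval (((x + 1 : ℝ)) : ℂ) = r.eval (x:ℂ) := by
        intro x
        rw [← hr, ← hr]
        have e1 : x + 1 + h = x + h + 1 := by ring
        rw [e1, hper (x + h), hper x]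
      have hnat : ∀ k : ℕ, r.eval ((k:ℝ):ℂ) = r.eval ((0:ℝ):ℂ) := by
        intro k
        induction k with
        | zero => norm_num
        | succ k ihk =>
          have := hper2 k
          push_cast at this ihk ⊢
          rw [← ihk, ← this]
      have hrC : r = C (r.eval 0) := by
        have hz : r - C (r.eval 0) = 0 := by
          apply Polynomial.eq_zero_of_infinite_isRoot
          apply Set.Infinite.mono (s := Set.range (fun k : ℕ => (k:ℂ)))
          · rintro _ ⟨k, rfl⟩
            simp only [Set.mem_setOf_eq, Polynomial.IsRoot, Polynomial.eval_sub,
              Polynomial.eval_C]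
            have := hnat k
            push_cast at this
            rw [this]
            norm_num
          · exact Set.infinite_range_of_injective Nat.cast_injective
        exact sub_eq_zero.mp hz
      intro x
      have e0 := hr 0
      have ex := hr x
      have hxx : r.eval ((x:ℝ):ℂ) = r.eval ((0:ℝ):ℂ) := by rw [hrC]; simp
      rw [ex, hxx, ← e0, zero_add]
    -- additive part
    set u : ℝ → ℂ := fun x => g x - g 0 with hudef
    have hadd : ∀ x y : ℝ, u (x + y) = u x + u y := by
      intro x y
      have := hconst y x
      simp only [hudef]
      rw [sub_eq_iff_eq_add] at this
      rw [this]
      ring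
    have hu1 : u 1 = 0 := by
      simp only [hudef]
      have := hper 0
      rw [zero_add] at this
      rw [this, sub_self]
    have huc : Continuous u := hgc.sub continuous_const
    set φ : ℝ →+ ℂ := AddMonoidHom.mk' u hadd with hφ
    have hrat : ∀ qq : ℚ, u (qq:ℝ) = 0 := by
      intro qq
      have := map_ratCast_smul φ ℝ ℂ qq (1:ℝ)
      simp only [hφ, AddMonoidHom.mk'_apply] at this
      rw [smul_eq_mul, mul_one] at this
      rw [this, hu1, smul_zero]
    have hu0 : u = fun _ => 0 := by
      apply Continuous.ext_on (Rat.denseRange_cast (𝕜 := ℝ)) huc continuous_const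
      rintro _ ⟨qq, rfl⟩
      exact hrat qq
    refine ⟨R + C (g 0), fun x => ?_⟩
    have hx := congrFun hu0 x
    simp only [hudef] at hx
    have hgx : g x = g 0 := by
      have := sub_eq_zero.mp hx
      exact this
    simp only [hgdef] at hgx
    rw [Polynomial.eval_add, Polynomial.eval_C]
    linear_combination hgx

end OneD

section MV
open MvPolynomial


variable {m : ℕ}

def Dm (v : Fin m → ℝ) (F : (Fin m → ℝ) → ℂ) : (Fin m → ℝ) → ℂ :=
  fun y => F (y + v) - F y

def iterDm : List (Fin m → ℝ) → ((Fin m → ℝ) → ℂ) → ((Fin m → ℝ) → ℂ)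
  | [], F => F
  | v :: t, F => iterDm t (Dm v F)

lemma iterDm_nil (F : (Fin m → ℝ) → ℂ) : iterDm [] F = F := rfl

lemma iterDm_cons (v : Fin m → ℝ) (t : List (Fin m → ℝ)) (F) :
    iterDm (v :: t) F = iterDm t (Dm v F) := rfl

lemma Dm_comm (v w : Fin m → ℝ) (F) : Dm v (Dm w F) = Dm w (Dm v F) := by
  funext y
  simp only [Dm]
  rw [add_right_comm]
  ring

lemma Dm_zero_fun (v : Fin m → ℝ) : Dm v (fun _ => (0:ℂ)) = fun _ => 0 := by
  funext y; simp [Dm]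

lemma iterDm_zero_fun (l : List (Fin m → ℝ)) : iterDm l (fun _ => (0:ℂ)) = fun _ => 0 := by
  induction l with
  | nil => rfl
  | cons a t ih => rw [iterDm_cons, Dm_zero_fun, ih]

lemma iterDm_Dm (l : List (Fin m → ℝ)) (v) (F) :
    iterDm l (Dm v F) = Dm v (iterDm l F) := by
  induction l generalizing F with
  | nil => rfl
  | cons a t ih => rw [iterDm_cons, Dm_comm, ih, iterDm_cons]

lemma iterDm_eq_zero_of_mem (l : List (Fin m → ℝ)) (v) (hmem : v ∈ l) (F)
    (hz : Dm v F = fun _ => 0) : iterDm l F = fun _ => 0 := by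
  induction l generalizing F with
  | nil => simp at hmem
  | cons a t ih =>
    rw [iterDm_cons]
    rcases List.mem_cons.mp hmem with rfl | hmem'
    · rw [hz, iterDm_zero_fun]
    · exact ih hmem' _ (by rw [Dm_comm, hz, Dm_zero_fun])

lemma iterDm_append (l₁ l₂ : List (Fin m → ℝ)) (F) :
    iterDm (l₁ ++ l₂) F = iterDm l₂ (iterDm l₁ F) := by
  induction l₁ generalizing F with
  | nil => rfl
  | cons a t ih => rw [List.cons_append, iterDm_cons, iterDm_cons, ih]

lemma Dm_finsum {ι : Type*} (v : Fin m → ℝ) (t : Finset ι) (F : ι → (Fin m → ℝ) → ℂ) :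
    Dm v (fun y => ∑ a ∈ t, F a y) = fun y => ∑ a ∈ t, Dm v (F a) y := by
  funext y
  simp [Dm, Finset.sum_sub_distrib]

lemma iterDm_finsum {ι : Type*} (l : List (Fin m → ℝ)) (t : Finset ι)
    (F : ι → (Fin m → ℝ) → ℂ) :
    iterDm l (fun y => ∑ a ∈ t, F a y) = fun y => ∑ a ∈ t, iterDm l (F a) y := by
  induction l generalizing F with
  | nil => rfl
  | cons v l' ih =>
    rw [iterDm_cons, Dm_finsum, ih]
    simp only [iterDm_cons]

lemma Dm_add (v : Fin m → ℝ) (F G : (Fin m → ℝ) → ℂ) :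
    Dm v (fun y => F y + G y) = fun y => Dm v F y + Dm v G y := by
  funext y; simp [Dm]; ring

lemma iterDm_add (l : List (Fin m → ℝ)) (F G) :
    iterDm l (fun y => F y + G y) = fun y => iterDm l F y + iterDm l G y := by
  induction l generalizing F G with
  | nil => rfl
  | cons v l' ih => rw [iterDm_cons, Dm_add, ih]; simp only [iterDm_cons]

/-- composition with an additive map -/
lemma iterDm_comp (L : (Fin m → ℝ) → ℝ) (Ladd : ∀ y v, L (y + v) = L y + L v)
    (ψ : ℝ → ℂ) (l : List (Fin m → ℝ)) :
    iterDm l (fun y => ψ (L y)) = fun y => iterD (l.map L) ψ (L y) := by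
  induction l generalizing ψ with
  | nil => rfl
  | cons v l' ih =>
    rw [iterDm_cons, List.map_cons, iterD]
    have : Dm v (fun y => ψ (L y)) = fun y => del (L v) ψ (L y) := by
      funext y; simp [Dm, del, Ladd]
    rw [this, ih]

/-! ### polynomial part -/

def shiftp (v : Fin m → ℝ) (p : MvPolynomial (Fin m) ℂ) : MvPolynomial (Fin m) ℂ :=
  aeval (fun j => X j + C ((v j : ℂ))) p

lemma eval_shiftp (p : MvPolynomial (Fin m) ℂ) (y v : Fin m → ℝ) :
    MvPolynomial.eval (fun j => (((y + v) j : ℝ) : ℂ)) p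
      = MvPolynomial.eval (fun j => ((y j : ℝ) : ℂ)) (shiftp v p) := by
  induction p using MvPolynomial.induction_on with
  | C a => simp [shiftp]
  | add p q hp hq => simp [shiftp, map_add] at hp hq ⊢; rw [hp, hq]
  | mul_X p j hp =>
    simp only [shiftp, map_mul, aeval_X, eval_mul] at hp ⊢
    rw [hp]
    congr 1
    simp [Pi.add_apply]

lemma Dm_evalp (v : Fin m → ℝ) (p : MvPolynomial (Fin m) ℂ) :
    Dm v (fun y => MvPolynomial.eval (fun j => ((y j : ℝ) : ℂ)) p)
      = fun y => MvPolynomial.eval (fun j => ((y j : ℝ) : ℂ)) (shiftp v p - p) := by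
  funext y
  simp only [Dm, map_sub]
  rw [← eval_shiftp]

/-- single variable power difference degree bound -/
lemma tot_pow_sub (j : Fin m) (c : ℂ) :
    ∀ (e N : ℕ), e ≤ N + 1 →
      ((X j + C c) ^ e - X j ^ e : MvPolynomial (Fin m) ℂ).totalDegree ≤ N := by
  intro e
  induction e with
  | zero => intro N _; simp
  | succ e ih =>
    intro N he
    rcases Nat.eq_zero_or_pos e with rfl | hepos
    · have : ((X j + C c) ^ 1 - X j ^ 1 : MvPolynomial (Fin m) ℂ) = C c := by ring
      rw [this]
      simp
    · have hN : 1 ≤ N := by omega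
      have key : ((X j + C c) ^ (e+1) - X j ^ (e+1) : MvPolynomial (Fin m) ℂ)
          = (X j + C c) * ((X j + C c) ^ e - X j ^ e) + C c * X j ^ e := by ring
      rw [key]
      refine le_trans (totalDegree_add _ _) (max_le ?_ ?_)
      · refine le_trans (totalDegree_mul _ _) ?_
        have h1 : (X j + C c : MvPolynomial (Fin m) ℂ).totalDegree ≤ 1 := by
          refine le_trans (totalDegree_add _ _) ?_
          simp [totalDegree_X, totalDegree_C]
        have h2 := ih (N - 1) (by omega)
        omega
      · refine le_trans (totalDegree_mul _ _) ?_
        have : (X j ^ e : MvPolynomial (Fin m) ℂ).totalDegree ≤ e := by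
          refine le_trans (totalDegree_pow _ _) ?_
          simp [totalDegree_X]
        simp only [totalDegree_C, zero_add]
        omega

lemma tot_prod_sub (v : Fin m → ℝ) :
    ∀ (s : Finset (Fin m)) (k : Fin m → ℕ) (N : ℕ), (∑ j ∈ s, k j) ≤ N + 1 →
      ((∏ j ∈ s, (X j + C ((v j : ℂ))) ^ k j) - ∏ j ∈ s, (X j) ^ k j
        : MvPolynomial (Fin m) ℂ).totalDegree ≤ N := by
  intro s
  induction s using Finset.induction_on with
  | empty => intro k N _; simp
  | @insert j s hj ih =>
    intro k N hsum
    rw [Finset.prod_insert hj, Finset.prod_insert hj]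
    rw [Finset.sum_insert hj] at hsum
    set A : MvPolynomial (Fin m) ℂ := (X j + C ((v j : ℂ))) ^ k j with hA
    set A' : MvPolynomial (Fin m) ℂ := (X j) ^ k j with hA'
    set B : MvPolynomial (Fin m) ℂ := ∏ i ∈ s, (X i + C ((v i : ℂ))) ^ k i with hB
    set B' : MvPolynomial (Fin m) ℂ := ∏ i ∈ s, (X i) ^ k i with hB'
    have key : A * B - A' * B' = A * (B - B') + (A - A') * B' := by ring
    rw [key]
    refine le_trans (totalDegree_add _ _) (max_le ?_ ?_)
    · rcases le_or_gt (k j) N with hkj | hkj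
      · refine le_trans (totalDegree_mul _ _) ?_
        have h1 : A.totalDegree ≤ k j := by
          rw [hA]
          refine le_trans (totalDegree_pow _ _) ?_
          have : (X j + C ((v j : ℂ)) : MvPolynomial (Fin m) ℂ).totalDegree ≤ 1 := by
            refine le_trans (totalDegree_add _ _) ?_
            simp [totalDegree_X, totalDegree_C]
          calc k j * (X j + C ((v j:ℂ)) : MvPolynomial (Fin m) ℂ).totalDegree
              ≤ k j * 1 := Nat.mul_le_mul_left _ this
            _ = k j := by omega
        have h2 : (B - B').totalDegree ≤ N - k j := ih k (N - k j) (by omega)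
        omega
      · -- k j = N + 1, all others zero
        have hzero : ∀ i ∈ s, k i = 0 := by
          intro i hi
          have : k i ≤ ∑ i' ∈ s, k i' := Finset.single_le_sum (fun _ _ => Nat.zero_le _) hi
          omega
        have hBB' : B = B' := by
          rw [hB, hB']
          rw [Finset.prod_eq_one (fun i hi => by rw [hzero i hi, pow_zero]),
            Finset.prod_eq_one (fun i hi => by rw [hzero i hi, pow_zero])]
        rw [hBB', sub_self, mul_zero]
        simp
    · rcases le_or_gt (∑ i ∈ s, k i) N with hsN | hsN
      swap
      · have hkj0 : k j = 0 := by omega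
        have hAA : A - A' = 0 := by rw [hA, hA', hkj0, pow_zero, pow_zero, sub_self]
        rw [hAA, zero_mul]
        simp
      refine le_trans (totalDegree_mul _ _) ?_
      have h1 : (A - A').totalDegree ≤ N - (∑ i ∈ s, k i) := by
        rw [hA, hA']
        exact tot_pow_sub j _ (k j) _ (by omega)
      have h2 : B'.totalDegree ≤ ∑ i ∈ s, k i := by
        rw [hB']
        refine le_trans (totalDegree_finset_prod _ _) ?_
        refine Finset.sum_le_sum (fun i _ => ?_)
        refine le_trans (totalDegree_pow _ _) ?_
        calc k i * (X i : MvPolynomial (Fin m) ℂ).totalDegree ≤ k i * 1 :=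
            Nat.mul_le_mul_left _ (le_of_eq (totalDegree_X i))
          _ = k i := by omega
      omega

lemma tot_shiftp_sub (v : Fin m → ℝ) (p : MvPolynomial (Fin m) ℂ) (N : ℕ)
    (hp : p.totalDegree ≤ N + 1) : (shiftp v p - p).totalDegree ≤ N := by
  have hps : shiftp v p - p
      = ∑ μ ∈ p.support, (shiftp v (monomial μ (coeff μ p)) - monomial μ (coeff μ p)) := by
    rw [Finset.sum_sub_distrib]
    conv_lhs => rw [MvPolynomial.as_sum p]
    rw [shiftp, map_sum]
    rfl
  rw [hps]
  refine le_trans (totalDegree_finset_sum _ _) ?_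
  refine Finset.sup_le (fun μ hμ => ?_)
  have hμd : (μ.sum fun _ e => e) ≤ N + 1 := le_trans (le_totalDegree hμ) hp
  have hmon : (monomial μ (coeff μ p) : MvPolynomial (Fin m) ℂ)
      = C (coeff μ p) * ∏ j ∈ μ.support, X j ^ μ j := by
    rw [monomial_eq]
    rfl
  have hshift : shiftp v (monomial μ (coeff μ p))
      = C (coeff μ p) * ∏ j ∈ μ.support, (X j + C ((v j : ℂ))) ^ μ j := by
    rw [hmon, shiftp, map_mul, map_prod]
    simp [aeval_X, algebraMap_eq]
  rw [hshift, hmon, ← mul_sub]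
  refine le_trans (totalDegree_mul _ _) ?_
  simp only [totalDegree_C, zero_add]
  refine tot_prod_sub v μ.support (fun j => μ j) N ?_
  rwa [Finsupp.sum] at hμd

lemma eq_C_of_tot0 (p : MvPolynomial (Fin m) ℂ) (h : p.totalDegree = 0) :
    p = C (coeff 0 p) := by
  ext μ
  rcases eq_or_ne μ 0 with rfl | hμ
  · simp
  · rw [coeff_C, if_neg (Ne.symm hμ)]
    by_contra hc
    have hsupp : μ ∈ p.support := by simpa [mem_support_iff] using hc
    have := (totalDegree_eq_zero_iff (Fin m) p).mp h μ hsupp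
    exact hμ (Finsupp.ext (fun j => this j))

lemma polykill : ∀ (d : ℕ) (p : MvPolynomial (Fin m) ℂ), p.totalDegree ≤ d →
    ∀ L : List (Fin m → ℝ), L.length = d + 1 →
      iterDm L (fun y => MvPolynomial.eval (fun j => ((y j : ℝ) : ℂ)) p) = fun _ => 0 := by
  intro d
  induction d with
  | zero =>
    intro p hp L hL
    match L, hL with
    | [v], _ =>
      rw [iterDm_cons, Dm_evalp, iterDm_nil]
      have : shiftp v p - p = 0 := by
        rw [eq_C_of_tot0 p (Nat.le_zero.mp hp)]
        simp [shiftp]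
      rw [this]
      funext y; simp
  | succ d ih =>
    intro p hp L hL
    match L, hL with
    | v :: L', hL =>
      rw [iterDm_cons, Dm_evalp]
      exact ih _ (tot_shiftp_sub v p d hp) L' (by simpa using hL)


end MV

variable {m n : ℕ}

def dir (j : Fin m) (t : ℝ) : Fin m → ℝ := fun k => if k = j then t else 0

def Li (α : Fin m → Fin n → ℝ) (i : Fin n) (y : Fin m → ℝ) : ℝ := ∑ j, α j i * y j

lemma Li_add (α : Fin m → Fin n → ℝ) (i : Fin n) (y v : Fin m → ℝ) :
    Li α i (y + v) = Li α i y + Li α i v := by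
  simp [Li, mul_add, Finset.sum_add_distrib]

lemma Li_smul (α : Fin m → Fin n → ℝ) (i : Fin n) (c : ℝ) (v : Fin m → ℝ) :
    Li α i (c • v) = c * Li α i v := by
  simp only [Li, Pi.smul_apply, smul_eq_mul, Finset.mul_sum]
  exact Finset.sum_congr rfl (fun j _ => by ring)

lemma Li_dir (α : Fin m → Fin n → ℝ) (i : Fin n) (j : Fin m) (t : ℝ) :
    Li α i (dir j t) = α j i * t := by
  rw [Li]
  rw [Finset.sum_eq_single j]
  · simp [dir]
  · intro k _ hk
    simp [dir, hk]
  · intro h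
    exact absurd (Finset.mem_univ j) h

lemma mul_div_self_cancel' (a c : ℝ) (ha : a ≠ 0) : a * (c / a) = c := by
  field_simp

lemma mem_zip_of_mem_left {α β : Type*} :
    ∀ (A : List α) (B : List β), A.length ≤ B.length → ∀ a : α, a ∈ A →
      ∃ b, (a, b) ∈ A.zip B := by
  intro A
  induction A with
  | nil => intro B _ a ha; simp at ha
  | cons x A' ih =>
    intro B hlen a ha
    cases B with
    | nil => simp at hlen
    | cons y B' =>
      rcases List.mem_cons.mp ha with rfl | ha'
      · exact ⟨y, by simp⟩
      · obtain ⟨b, hb⟩ := ih B' (by simpa [Nat.succ_le_succ_iff] using hlen) a ha'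
        exact ⟨b, List.mem_cons_of_mem _ hb⟩

lemma exists_w (hm : 1 ≤ m) (α : Fin m → Fin n → ℝ) (hα : ∀ j i, α j i ≠ 0)
    (i l : Fin n)
    (hpr : l ≠ i → ¬ ∃ c : ℝ, ∀ j : Fin m, α j l = c * α j i) :
    ∃ v : Fin m → ℝ, Li α i v = 1 ∧ (l ≠ i → Li α l v = 0) := by
  set j0 : Fin m := ⟨0, hm⟩
  by_cases hli : l = i
  · refine ⟨dir j0 (1 / α j0 i), ?_, fun h => absurd hli h⟩
    rw [Li_dir]
    exact mul_one_div_cancel (hα j0 i)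
  · have hc := hpr hli
    push_neg at hc
    obtain ⟨j1, hj1⟩ := hc (α j0 l / α j0 i)
    have hj10 : j1 ≠ j0 := by
      intro h
      subst h
      apply hj1
      exact (div_mul_cancel₀ _ (hα j0 i)).symm
    set v0 : Fin m → ℝ := fun k => if k = j0 then α j1 l else if k = j1 then -(α j0 l) else 0
      with hv0
    have hv0eq : v0 = dir j0 (α j1 l) + dir j1 (-(α j0 l)) := by
      funext k
      simp only [hv0, dir, Pi.add_apply]
      by_cases h1 : k = j0
      · simp [h1, Ne.symm hj10]
      · by_cases h2 : k = j1 <;> simp [h1, h2, hj10]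
    have hLl : Li α l v0 = 0 := by
      rw [hv0eq, Li_add, Li_dir, Li_dir]
      ring
    have hLi : Li α i v0 ≠ 0 := by
      rw [hv0eq, Li_add, Li_dir, Li_dir]
      intro h
      apply hj1
      have hα0 : α j0 i ≠ 0 := hα j0 i
      field_simp
      linear_combination h
    refine ⟨(1 / Li α i v0) • v0, ?_, fun _ => ?_⟩
    · rw [Li_smul]
      exact one_div_mul_cancel hLi
    · rw [Li_smul, hLl, mul_zero]


end Stmt16

open Stmt16 MvPolynomial in
/-- real-line strengthening of Lemma 2 used for Theorem 4: the
functional equation with an extra ordinary polynomial `p(y₁,…,yₘ)` on the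
right-hand side still forces each `ψᵢ` to be an ordinary polynomial. -/
theorem stmt16 (m n : ℕ) (hm : 1 ≤ m) (hn : 1 ≤ n)
    (ψ : Fin n → ℝ → ℂ) (hψ : ∀ i, Continuous (ψ i))
    (α : Fin m → Fin n → ℝ) (hα : ∀ j i, α j i ≠ 0)
    (hprop : ∀ i l : Fin n, i ≠ l → ¬ ∃ c : ℝ, ∀ j : Fin m, α j l = c * α j i)
    (s : Fin m → (Fin m → ℝ) → ℂ)
    (hs : ∀ (j : Fin m) (y y' : Fin m → ℝ), (∀ k, k ≠ j → y k = y' k) → s j y = s j y')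
    (p : MvPolynomial (Fin m) ℂ)
    (heq : ∀ y : Fin m → ℝ,
      ∑ i, ψ i (∑ j, α j i * y j)
        = (∑ j, s j y) + MvPolynomial.eval (fun j => (y j : ℂ)) p) :
    ∀ i, ∃ q : Polynomial ℂ, ∀ y : ℝ, ψ i y = Polynomial.eval (y : ℂ) q := by
  classical
  intro i
  have hwex : ∀ l : Fin n, ∃ v : Fin m → ℝ, Li α i v = 1 ∧ (l ≠ i → Li α l v = 0) :=
    fun l => exists_w hm α hα i l (fun hli => hprop i l hli.symm)
  choose w hw1 hw2 using hwex
  set j0 : Fin m := ⟨0, hm⟩ with hj0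
  set d := p.totalDegree with hd
  set P := (Finset.univ.erase i).toList with hPdef
  -- the key vanishing of all iterated differences of ψ i
  have main : ∀ steps : List ℝ, steps.length = (d + 1) + (m + P.length) →
      iterD steps (ψ i) = fun _ => 0 := by
    intro steps hlen
    set l₁ := steps.take (d + 1) with hl₁def
    set l₂₃ := steps.drop (d + 1) with hl₂₃def
    set l₂ := l₂₃.take m with hl₂def
    set l₃ := l₂₃.drop m with hl₃def
    have hl23 : l₂₃.length = m + P.length := by
      rw [hl₂₃def, List.length_drop, hlen]; omega
    have hl1 : l₁.length = d + 1 := by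
      rw [hl₁def, List.length_take, hlen]; omega
    have hl2 : l₂.length = m := by
      rw [hl₂def, List.length_take, hl23]; omega
    have hl3 : l₃.length = P.length := by
      rw [hl₃def, List.length_drop, hl23]; omega
    set B1 : List (Fin m → ℝ) := l₁.map (fun c => dir j0 (c / α j0 i)) with hB1
    set B2 : List (Fin m → ℝ) :=
      ((List.finRange m).zip l₂).map (fun z => dir z.1 (z.2 / α z.1 i)) with hB2
    set B3 : List (Fin m → ℝ) := (P.zip l₃).map (fun z => z.2 • w z.1) with hB3
    set dirs : List (Fin m → ℝ) := B1 ++ (B2 ++ B3) with hdirs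
    -- the image of the direction list under `Li α i` is exactly `steps`
    have hmapi : dirs.map (Li α i) = steps := by
      rw [hdirs, List.map_append, List.map_append, hB1, hB2, hB3,
        List.map_map, List.map_map, List.map_map]
      have e1 : l₁.map (Li α i ∘ fun c => dir j0 (c / α j0 i)) = l₁ := by
        have : ∀ c ∈ l₁, (Li α i ∘ fun c => dir j0 (c / α j0 i)) c = id c := by
          intro c _
          simp only [Function.comp_apply, Li_dir, id_eq]
          exact mul_div_self_cancel' _ _ (hα j0 i)
        rw [List.map_congr_left this, List.map_id]
      have e2 : ((List.finRange m).zip l₂).map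
          (Li α i ∘ fun z => dir z.1 (z.2 / α z.1 i)) = l₂ := by
        have : ∀ z ∈ (List.finRange m).zip l₂,
            (Li α i ∘ fun z => dir z.1 (z.2 / α z.1 i)) z = Prod.snd z := by
          intro z _
          simp only [Function.comp_apply, Li_dir]
          exact mul_div_self_cancel' _ _ (hα z.1 i)
        rw [List.map_congr_left this, List.map_snd_zip]
        rw [hl2, List.length_finRange]
      have e3 : (P.zip l₃).map (Li α i ∘ fun z => z.2 • w z.1) = l₃ := by
        have : ∀ z ∈ P.zip l₃, (Li α i ∘ fun z => z.2 • w z.1) z = Prod.snd z := by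
          intro z _
          simp only [Function.comp_apply, Li_smul, hw1, mul_one]
        rw [List.map_congr_left this, List.map_snd_zip]
        rw [hl3]
      rw [e1, e2, e3, hl₂def, hl₃def, List.take_append_drop, hl₁def, hl₂₃def,
        List.take_append_drop]
    -- the functional equation, as an equality of functions
    have heqf : (fun y => ∑ i', ψ i' (Li α i' y)) =
        fun y => (∑ j, s j y) + MvPolynomial.eval (fun j => ((y j : ℝ) : ℂ)) p := by
      funext y
      exact heq y
    have happly := congrArg (iterDm dirs) heqf
    -- the right-hand side is annihilated
    have hRHS : iterDm dirs
        (fun y => (∑ j, s j y) + MvPolynomial.eval (fun j => ((y j : ℝ) : ℂ)) p)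
          = fun _ => 0 := by
      rw [iterDm_add]
      have hs0 : iterDm dirs (fun y => ∑ j, s j y) = fun _ => 0 := by
        rw [iterDm_finsum]
        funext y
        refine Finset.sum_eq_zero (fun j _ => ?_)
        obtain ⟨c, hc⟩ := mem_zip_of_mem_left (List.finRange m) l₂
          (by rw [hl2, List.length_finRange]) j (List.mem_finRange j)
        have hmem : dir j (c / α j i) ∈ dirs := by
          rw [hdirs]
          refine List.mem_append.mpr (Or.inr (List.mem_append.mpr (Or.inl ?_)))
          exact List.mem_map.mpr ⟨(j, c), hc, rfl⟩
        have hkill : Dm (dir j (c / α j i)) (s j) = fun _ => 0 := by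
          funext y'
          simp only [Dm]
          rw [hs j (y' + dir j (c / α j i)) y'
            (fun k hk => by simp [dir, hk, Pi.add_apply]), sub_self]
        rw [iterDm_eq_zero_of_mem dirs _ hmem (s j) hkill]
      have hp0 : iterDm dirs
          (fun y => MvPolynomial.eval (fun j => ((y j : ℝ) : ℂ)) p) = fun _ => 0 := by
        rw [hdirs, iterDm_append,
          polykill d p le_rfl B1 (by rw [hB1, List.length_map, hl1]), iterDm_zero_fun]
      rw [hs0, hp0]
      funext y
      simp
    -- the left-hand side reduces to the iterated difference of ψ i
    have hLHS : iterDm dirs (fun y => ∑ i', ψ i' (Li α i' y)) =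
        fun y => iterD steps (ψ i) (Li α i y) := by
      rw [iterDm_finsum]
      funext y
      rw [Finset.sum_eq_single_of_mem i (Finset.mem_univ i)]
      · rw [iterDm_comp (Li α i) (Li_add α i), hmapi]
      · intro l' _ hl'
        rw [iterDm_comp (Li α l') (Li_add α l')]
        have hl'P : l' ∈ P := by
          rw [hPdef, Finset.mem_toList]
          exact Finset.mem_erase.mpr ⟨hl', Finset.mem_univ l'⟩
        obtain ⟨c, hc⟩ := mem_zip_of_mem_left P l₃ (le_of_eq hl3.symm) l' hl'P
        have h0mem : (0 : ℝ) ∈ dirs.map (Li α l') := by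
          refine List.mem_map.mpr ⟨c • w l', ?_, ?_⟩
          · rw [hdirs]
            refine List.mem_append.mpr (Or.inr (List.mem_append.mpr (Or.inr ?_)))
            exact List.mem_map.mpr ⟨(l', c), hc, rfl⟩
          · rw [Li_smul, hw2 l' hl', mul_zero]
        rw [iterD_eq_zero_of_mem _ 0 h0mem _ (del_zero_step _)]
    rw [hLHS, hRHS] at happly
    funext x
    have hsur := congrFun happly (dir j0 (x / α j0 i))
    have hLx : Li α i (dir j0 (x / α j0 i)) = x := by
      rw [Li_dir]
      exact mul_div_self_cancel' _ _ (hα j0 i)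
    rw [hLx] at hsur
    exact hsur
  exact poly_of_iterD_eq_zero _ (ψ i) (hψ i) main

end
end
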